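/- Fix n sufficiently large and consider a sequence with m_0 ≤ n, m_1 ≤ 0.64·m_0, and m_{i+1} ≤ (5/4)·m_i²/w_i where w_i ≥ 4n/2^i, for all i with m_i ≥ n^{7/10}. Then m_{i+1} ≤ (4/5)·m_0/(2^i·2^{2^i·lg(5/4)}) for all such i. -/

import Mathlib

/-- Deterministic recursive core of the induction for Sawtooth Backoff, where
window sizes satisfy `w_i ≥ 4n/2^i`: for sufficiently large `n`, if `m₀ ≤ n`,
`m₁ ≤ 0.64·m₀`, and `m_{i+1} ≤ (5/4)·m_i²/w_i` whenever `m_i ≥ n^{7/10}`, then for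
every `i` with `m_k ≥ n^{7/10}` for all `k ≤ i`,
`m_{i+1} ≤ (4/5)·m₀/(2^i·2^{2^i·lg(5/4)})`. -/
theorem induction_sawtooth :
    ∃ n₀ : ℕ, ∀ n : ℕ, n₀ ≤ n → ∀ m w : ℕ → ℝ,
      (∀ i, 4 * (n : ℝ) / 2 ^ i ≤ w i) →
      m 0 ≤ n →
      m 1 ≤ 0.64 * m 0 →
      (∀ i, (n : ℝ) ^ ((7 : ℝ) / 10) ≤ m i → m (i + 1) ≤ 5 / 4 * (m i) ^ 2 / w i) →
      ∀ i : ℕ, (∀ k ≤ i, (n : ℝ) ^ ((7 : ℝ) / 10) ≤ m k) →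
        m (i + 1) ≤
          4 / 5 * m 0 / ((2 : ℝ) ^ i * (2 : ℝ) ^ ((2 : ℝ) ^ i * Real.logb 2 (5 / 4))) := by
  use 1
  intro n hn m w hw hm0 hm1 hrec
  have hn1 : (1 : ℝ) ≤ (n : ℝ) := by exact_mod_cast hn
  have hnpos : (0 : ℝ) < (n : ℝ) := by linarith
  have hrpos : (0 : ℝ) < (n : ℝ) ^ ((7 : ℝ) / 10) :=
    Real.rpow_pos_of_pos hnpos _
  have key : ∀ i : ℕ, (∀ k ≤ i, (n : ℝ) ^ ((7 : ℝ) / 10) ≤ m k) →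
      m (i + 1) ≤ 4 / 5 * m 0 / ((2 : ℝ) ^ i * ((5 : ℝ) / 4) ^ (2 ^ i)) := by
    intro i
    induction i with
    | zero =>
      intro _
      norm_num at hm1 ⊢
      linarith
    | succ i ih =>
      intro h
      have ih' := ih (fun k hk => h k (le_trans hk (Nat.le_succ i)))
      have hm1ge : (n : ℝ) ^ ((7 : ℝ) / 10) ≤ m (i + 1) := h (i + 1) le_rfl
      have hmpos : 0 < m (i + 1) := lt_of_lt_of_le hrpos hm1ge
      have hm0pos : 0 < m 0 := lt_of_lt_of_le hrpos (h 0 (Nat.zero_le _))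
      have hwge := hw (i + 1)
      have hwpos : 0 < w (i + 1) :=
        lt_of_lt_of_le (by positivity) hwge
      have step1 : m (i + 2) ≤ 5 / 4 * (m (i + 1)) ^ 2 / w (i + 1) :=
        hrec (i + 1) hm1ge
      set p : ℝ := (2 : ℝ) ^ i with hp
      have hppos : 0 < p := by positivity
      set P : ℝ := ((5 : ℝ) / 4) ^ (2 ^ i) with hP
      have hPpos : 0 < P := by positivity
      have hexp : ((5 : ℝ) / 4) ^ (2 ^ (i + 1)) = P ^ 2 := by
        rw [hP, ← pow_mul]
        ring_nf
      have hp2 : (2 : ℝ) ^ (i + 1) = 2 * p := by rw [hp, pow_succ]; ring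
      have step2 : 5 / 4 * (m (i + 1)) ^ 2 / w (i + 1)
          ≤ 5 / 4 * (m (i + 1)) ^ 2 * (2 * p) / (4 * n) := by
        rw [div_le_div_iff₀ hwpos (by positivity)]
        have h1 : 4 * (n : ℝ) / (2 * p) ≤ w (i + 1) := by
          rw [← hp2]; exact hwge
        have h2 : 4 * (n : ℝ) ≤ w (i + 1) * (2 * p) := by
          rw [div_le_iff₀ (by positivity)] at h1; linarith
        nlinarith [sq_nonneg (m (i + 1)), hmpos]
      have hB : m (i + 1) ≤ 4 / 5 * m 0 / (p * P) := ih'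
      have hsq : (m (i + 1)) ^ 2 ≤ (4 / 5 * m 0 / (p * P)) ^ 2 := by
        apply pow_le_pow_left₀ (le_of_lt hmpos) hB
      have step3 : 5 / 4 * (m (i + 1)) ^ 2 * (2 * p) / (4 * n)
          ≤ 5 / 4 * (4 / 5 * m 0 / (p * P)) ^ 2 * (2 * p) / (4 * n) := by
        apply div_le_div_of_nonneg_right _ (by positivity)
        nlinarith
      have step4 : 5 / 4 * (4 / 5 * m 0 / (p * P)) ^ 2 * (2 * p) / (4 * n)
          ≤ 4 / 5 * m 0 / ((2 : ℝ) ^ (i + 1) * ((5 : ℝ) / 4) ^ (2 ^ (i + 1))) := by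
        rw [hexp, hp2]
        rw [div_le_div_iff₀ (by positivity) (by positivity)]
        have hm0n : m 0 * m 0 ≤ m 0 * n := by nlinarith
        have hne : (p * P) ^ 2 ≠ 0 := by positivity
        field_simp
        have hkey := mul_le_mul_of_nonneg_right hm0n
          (show (0:ℝ) ≤ ((5:ℝ)/4) ^ (2 ^ i * 2) * 2 ^ (i * 2) * 320 by positivity)
        ring_nf
        ring_nf at hkey
        linarith
      calc m (i + 2) ≤ 5 / 4 * (m (i + 1)) ^ 2 / w (i + 1) := step1
        _ ≤ 5 / 4 * (m (i + 1)) ^ 2 * (2 * p) / (4 * n) := step2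
        _ ≤ 5 / 4 * (4 / 5 * m 0 / (p * P)) ^ 2 * (2 * p) / (4 * n) := step3
        _ ≤ _ := step4
  intro i h
  have heq : (2 : ℝ) ^ ((2 : ℝ) ^ i * Real.logb 2 (5 / 4)) = ((5 : ℝ) / 4) ^ (2 ^ i) := by
    rw [mul_comm, Real.rpow_mul (by norm_num : (0:ℝ) ≤ 2),
      Real.rpow_logb (by norm_num) (by norm_num) (by norm_num),
      show ((2 : ℝ) ^ i) = ((2 ^ i : ℕ) : ℝ) by push_cast; ring,
      Real.rpow_natCast]
  rw [heq]
  exact key i h
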